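/- Let P ⊂ ℝ^d be a d-dimensional polytope and let W be a set of vertices of P whose removal disconnects the graph G(P) of P. Then the affine span of the points of W has dimension at least d − 1. -/

import Mathlib

open scoped Classical
set_option linter.unusedSectionVars false
set_option maxHeartbeats 1000000

noncomputable section

/-- The body of the polytope with vertex embedding `p`. -/
def body {V : Type} [Fintype V] {d : ℕ} (p : V → EuclideanSpace ℝ (Fin d)) :
    Set (EuclideanSpace ℝ (Fin d)) :=
  convexHull ℝ (Set.range p)

/-- A finite vertex set `F` spans a proper (exposed) face of the polytope. -/
def IsBdryFace {V : Type} [Fintype V] {d : ℕ} (p : V → EuclideanSpace ℝ (Fin d))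
    (F : Finset V) : Prop :=
  IsExposed ℝ (body p) (convexHull ℝ (p '' (F : Set V))) ∧
    convexHull ℝ (p '' (F : Set V)) ≠ body p

/-- `p` is the vertex embedding of a (not necessarily simplicial) `d`-polytope:
the points are distinct extreme points of their convex hull and affinely span `ℝ^d`. -/
structure IsPolytope {V : Type} [Fintype V] {d : ℕ}
    (p : V → EuclideanSpace ℝ (Fin d)) : Prop where
  inj : Function.Injective p
  spans : affineSpan ℝ (Set.range p) = ⊤
  vertex : ∀ v, p v ∈ Set.extremePoints ℝ (body p)

/-- The graph of the polytope: two vertices are adjacent iff they span a proper face. -/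
def polyGraph {V : Type} [Fintype V] {d : ℕ} (p : V → EuclideanSpace ℝ (Fin d)) :
    SimpleGraph V where
  Adj a b := a ≠ b ∧ IsBdryFace p {a, b}
  symm := by
    constructor
    intro a b h
    exact ⟨h.1.symm, by rw [Finset.pair_comm]; exact h.2⟩
  loopless := by constructor; intro a h; exact h.1 rfl

namespace Balinski

variable {V : Type} [Fintype V] {d : ℕ} {p : V → EuclideanSpace ℝ (Fin d)}

local notation "E" => EuclideanSpace ℝ (Fin d)

/-- Convex hull of the vertices indexed by `S`. -/
def hullS (p : V → EuclideanSpace ℝ (Fin d)) (S : Finset V) : Set (EuclideanSpace ℝ (Fin d)) :=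
  convexHull ℝ (p '' (S : Set V))

/-- Vertices of `S` maximizing the functional `h`. -/
def argmaxSet (p : V → EuclideanSpace ℝ (Fin d)) (S : Finset V)
    (h : EuclideanSpace ℝ (Fin d) →L[ℝ] ℝ) : Finset V :=
  S.filter fun v => ∀ w ∈ S, h (p w) ≤ h (p v)

/-- `S` is the vertex set of the whole polytope or of a proper exposed face. -/
def IsFaceSet (p : V → EuclideanSpace ℝ (Fin d)) (S : Finset V) : Prop :=
  S = Finset.univ ∨ IsBdryFace p S

/- ---------- elementary helpers ---------- -/

lemma half_lt_of_mul_lt {ε a b : ℝ} (hε : 0 < ε) (h1 : ε * b < a) (h2 : 0 < a) :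
    ε / 2 * b < a := by
  rcases le_or_gt 0 b with hb | hb
  · nlinarith
  · nlinarith

lemma exists_pos_forall_mul_lt {α : Type*} (F : Finset α) (a b : α → ℝ)
    (ha : ∀ x ∈ F, 0 < a x) : ∃ ε : ℝ, 0 < ε ∧ ∀ x ∈ F, ε * b x < a x := by
  classical
  induction F using Finset.induction with
  | empty => exact ⟨1, one_pos, by simp⟩
  | @insert x F hx ih =>
    obtain ⟨ε, hε, hF⟩ := ih fun y hy => ha y (Finset.mem_insert_of_mem hy)
    have hax : 0 < a x := ha x (Finset.mem_insert_self _ _)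
    refine ⟨min ε (a x / (|b x| + 1)), lt_min hε (by positivity), ?_⟩
    intro y hy
    rcases Finset.mem_insert.1 hy with rfl | hy
    · have h1 : min ε (a y / (|b y| + 1)) * b y ≤ min ε (a y / (|b y| + 1)) * |b y| := by
        apply mul_le_mul_of_nonneg_left (le_abs_self _) (le_of_lt (lt_min hε (by positivity)))
      have h2 : min ε (a y / (|b y| + 1)) * |b y| < min ε (a y / (|b y| + 1)) * (|b y| + 1) := by
        apply mul_lt_mul_of_pos_left (by linarith) (lt_min hε (by positivity))
      have h3 : min ε (a y / (|b y| + 1)) * (|b y| + 1) ≤ (a y / (|b y| + 1)) * (|b y| + 1) := by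
        apply mul_le_mul_of_nonneg_right (min_le_right _ _) (by positivity)
      have h4 : (a y / (|b y| + 1)) * (|b y| + 1) = a y := by
        field_simp
      linarith
    · have hby := hF y hy
      rcases le_or_gt 0 (b y) with hb | hb
      · have : min ε (a x / (|b x| + 1)) * b y ≤ ε * b y :=
          mul_le_mul_of_nonneg_right (min_le_left _ _) hb
        linarith
      · have : min ε (a x / (|b x| + 1)) * b y < 0 := by
          apply mul_neg_of_pos_of_neg (lt_min hε (by positivity)) hb
        exact this.trans (ha y (Finset.mem_insert_of_mem hy))

lemma body_eq : body p = hullS p Finset.univ := by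
  simp [body, hullS, Set.image_univ]

lemma hullS_mono {S T : Finset V} (h : S ⊆ T) : hullS p S ⊆ hullS p T := by
  exact convexHull_mono (Set.image_mono (by exact_mod_cast h))

lemma mem_hullS {S : Finset V} {v : V} (hv : v ∈ S) : p v ∈ hullS p S := by
  exact subset_convexHull ℝ _ ⟨v, by exact_mod_cast hv, rfl⟩

lemma hullS_subset_body (S : Finset V) : hullS p S ⊆ body p := by
  exact convexHull_mono (by rintro x ⟨v, _, rfl⟩; exact ⟨v, rfl⟩)

lemma mem_argmaxSet {S : Finset V} {h : EuclideanSpace ℝ (Fin d) →L[ℝ] ℝ} {v : V} :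
    v ∈ argmaxSet p S h ↔ v ∈ S ∧ ∀ w ∈ S, h (p w) ≤ h (p v) := by
  simp [argmaxSet]

lemma argmaxSet_subset (S : Finset V) (h : EuclideanSpace ℝ (Fin d) →L[ℝ] ℝ) :
    argmaxSet p S h ⊆ S := Finset.filter_subset _ _

lemma argmaxSet_nonempty {S : Finset V} (hS : S.Nonempty)
    (h : EuclideanSpace ℝ (Fin d) →L[ℝ] ℝ) : (argmaxSet p S h).Nonempty := by
  classical
  obtain ⟨v, hv, hmax⟩ := S.exists_max_image (fun v => h (p v)) hS
  exact ⟨v, mem_argmaxSet.2 ⟨hv, hmax⟩⟩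

lemma argmax_const {S : Finset V} {h : EuclideanSpace ℝ (Fin d) →L[ℝ] ℝ} {v w : V}
    (hv : v ∈ argmaxSet p S h) (hw : w ∈ argmaxSet p S h) : h (p v) = h (p w) := by
  rw [mem_argmaxSet] at hv hw
  exact le_antisymm (hw.2 v hv.1) (hv.2 w hw.1)

/- ---------- extreme-point facts ---------- -/


lemma V_nonempty (hP : IsPolytope p) : Nonempty V := by
  by_contra h
  have hr : Set.range p = ∅ := Set.range_eq_empty_iff.2 (by simpa using h)
  have := hP.spans
  rw [hr] at this
  simp only [AffineSubspace.span_empty] at this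
  have h0 : (0 : EuclideanSpace ℝ (Fin d)) ∈ (⊥ : AffineSubspace ℝ (EuclideanSpace ℝ (Fin d))) := by
    rw [this]; trivial
  exact h0

lemma extremePoints_hullS (hP : IsPolytope p) (S : Finset V) :
    (hullS p S).extremePoints ℝ = p '' (S : Set V) := by
  apply Set.Subset.antisymm
  · exact extremePoints_convexHull_subset
  · rintro x ⟨v, hv, rfl⟩
    rw [mem_extremePoints]
    refine ⟨mem_hullS (by exact_mod_cast hv), fun x₁ h₁ x₂ h₂ hseg => ?_⟩
    exact ⟨(hP.vertex v).2 (hullS_subset_body S h₁) (hullS_subset_body S h₂) hseg,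
      (hP.vertex v).2 (hullS_subset_body S h₂) (hullS_subset_body S h₁)
        (by rw [openSegment_symm]; exact hseg)⟩

lemma hullS_inj (hP : IsPolytope p) {S T : Finset V} (h : hullS p S = hullS p T) : S = T := by
  have h1 := extremePoints_hullS hP S
  have h2 := extremePoints_hullS hP T
  rw [h] at h1
  have himg : p '' (S : Set V) = p '' (T : Set V) := h1.symm.trans h2
  have : (S : Set V) = (T : Set V) := Function.Injective.image_injective hP.inj himg
  exact_mod_cast Finset.coe_injective this

lemma vertex_exposed (hP : IsPolytope p) {S : Finset V} {v : V} (hv : v ∈ S) :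
    ∃ g : EuclideanSpace ℝ (Fin d) →L[ℝ] ℝ, ∀ u ∈ S, u ≠ v → g (p u) < g (p v) := by
  classical
  have hx : p v ∈ (hullS p S).extremePoints ℝ := by
    rw [extremePoints_hullS hP]; exact ⟨v, by exact_mod_cast hv, rfl⟩
  have hconv : Convex ℝ (hullS p S \ {p v}) :=
    ((convex_convexHull ℝ _).mem_extremePoints_iff_convex_diff.1 hx).2
  set A' : Set (EuclideanSpace ℝ (Fin d)) := p '' (S : Set V) \ {p v} with hA'
  have hsub : convexHull ℝ A' ⊆ hullS p S \ {p v} := by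
    apply convexHull_min _ hconv
    intro y hy
    exact ⟨subset_convexHull ℝ _ hy.1, hy.2⟩
  have hnot : p v ∉ convexHull ℝ A' := fun hmem => (hsub hmem).2 rfl
  have hfin : A'.Finite := ((S : Set V).toFinite.image p).diff
  obtain ⟨f, u, hfa, hfv⟩ :=
    geometric_hahn_banach_closed_point (convex_convexHull ℝ A') (hfin.isClosed_convexHull (𝕜 := ℝ)) hnot
  refine ⟨f, fun w hw hne => ?_⟩
  have hmem : p w ∈ A' := ⟨⟨w, by exact_mod_cast hw, rfl⟩, fun heq => hne (hP.inj heq)⟩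
  exact (hfa _ (subset_convexHull ℝ _ hmem)).trans hfv

/- ---------- the argmax face ---------- -/

lemma hullS_le_max {S : Finset V} {h : EuclideanSpace ℝ (Fin d) →L[ℝ] ℝ} {M : ℝ}
    (hub : ∀ v ∈ S, h (p v) ≤ M) {x : EuclideanSpace ℝ (Fin d)} (hx : x ∈ hullS p S) :
    h x ≤ M := by
  have : hullS p S ⊆ {x | h x ≤ M} := by
    apply convexHull_min _ (convex_halfSpace_le ⟨fun a b => map_add h a b, fun c a => map_smul h c a⟩ M)
    rintro x ⟨v, hv, rfl⟩
    exact hub v (by exact_mod_cast hv)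
  exact this hx

lemma face_eq (hP : IsPolytope p) {S : Finset V} (hS : S.Nonempty)
    (h : EuclideanSpace ℝ (Fin d) →L[ℝ] ℝ) :
    hullS p (argmaxSet p S h) = {x ∈ hullS p S | ∀ y ∈ hullS p S, h y ≤ h x} := by
  classical
  obtain ⟨v₀, hv₀⟩ := argmaxSet_nonempty hS h
  set M := h (p v₀) with hM
  have hub : ∀ v ∈ S, h (p v) ≤ M := (mem_argmaxSet.1 hv₀).2
  have hTub : ∀ x ∈ hullS p S, h x ≤ M := fun x hx => hullS_le_max hub hx
  have hTval : ∀ u ∈ argmaxSet p S h, h (p u) = M := fun u hu => argmax_const hu hv₀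
  apply Set.Subset.antisymm
  · intro x hx
    have hxS : x ∈ hullS p S := hullS_mono (argmaxSet_subset S h) hx
    have h2 : M ≤ h x := by
      have hsub : hullS p (argmaxSet p S h) ⊆ {y | M ≤ h y} := by
        apply convexHull_min _ (convex_halfSpace_ge ⟨fun a b => map_add h a b, fun c a => map_smul h c a⟩ M)
        rintro y ⟨u, hu, rfl⟩
        exact (hTval u (by exact_mod_cast hu)).ge
      exact hsub hx
    exact ⟨hxS, fun y hy => (hTub y hy).trans h2⟩
  · rintro x ⟨hxS, hxmax⟩
    have hxM : h x = M :=
      le_antisymm (hTub x hxS) (hxmax (p v₀) (mem_hullS (mem_argmaxSet.1 hv₀).1))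
    have hximg : x ∈ convexHull ℝ ((S.image p : Finset (EuclideanSpace ℝ (Fin d))) : Set (EuclideanSpace ℝ (Fin d))) := by
      rwa [Finset.coe_image]
    obtain ⟨w, hw0, hw1, hwx⟩ := (Finset.mem_convexHull').1 hximg
    have hval : ∀ y ∈ S.image p, h y ≤ M := by
      intro y hy
      obtain ⟨u, hu, rfl⟩ := Finset.mem_image.1 hy
      exact hub u hu
    have hx' : h x = ∑ y ∈ S.image p, w y * h y := by
      rw [← hwx, map_sum]
      refine Finset.sum_congr rfl fun y hy => ?_
      rw [map_smul, smul_eq_mul]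
    have hsum : ∑ y ∈ S.image p, w y * (M - h y) = 0 := by
      have : ∑ y ∈ S.image p, w y * (M - h y)
          = (∑ y ∈ S.image p, w y) * M - ∑ y ∈ S.image p, w y * h y := by
        rw [Finset.sum_mul, ← Finset.sum_sub_distrib]
        refine Finset.sum_congr rfl fun y hy => by ring
      rw [this, hw1, one_mul, ← hx', hxM]
      ring
    have hzero : ∀ y ∈ S.image p, w y * (M - h y) = 0 :=
      (Finset.sum_eq_zero_iff_of_nonneg
        (fun y hy => mul_nonneg (hw0 y hy) (sub_nonneg.2 (hval y hy)))).1 hsum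
    set B := (S.image p).filter (fun y => w y ≠ 0) with hB
    have hxB : x ∈ convexHull ℝ (B : Set (EuclideanSpace ℝ (Fin d))) := by
      apply Finset.mem_convexHull'.2
      refine ⟨w, fun y hy => hw0 y (Finset.filter_subset _ _ hy), ?_, ?_⟩
      · rw [hB, Finset.sum_filter_ne_zero]
        exact hw1
      · rw [hB]
        rw [Finset.sum_filter_of_ne (fun y _ hy0 => ?_)]
        · exact hwx
        · intro h0
          exact hy0 (by rw [h0, zero_smul])
    have hBsub : (B : Set (EuclideanSpace ℝ (Fin d))) ⊆ p '' ((argmaxSet p S h : Finset V) : Set V) := by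
      intro y hy
      have hy' := Finset.mem_filter.1 hy
      obtain ⟨u, hu, rfl⟩ := Finset.mem_image.1 hy'.1
      have hyM : h (p u) = M := by
        have := hzero _ hy'.1
        rcases mul_eq_zero.1 this with h0 | h0
        · exact absurd h0 hy'.2
        · linarith [sub_eq_zero.1 h0]
      exact ⟨u, by exact_mod_cast mem_argmaxSet.2 ⟨hu, fun z hz => (hub z hz).trans hyM.ge⟩, rfl⟩
    exact convexHull_mono hBsub hxB

lemma bdry_of_argmax (hP : IsPolytope p) {h : EuclideanSpace ℝ (Fin d) →L[ℝ] ℝ}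
    (hne : argmaxSet p Finset.univ h ≠ Finset.univ) :
    IsBdryFace p (argmaxSet p Finset.univ h) := by
  classical
  have : Nonempty V := V_nonempty hP
  have huniv : (Finset.univ : Finset V).Nonempty := Finset.univ_nonempty
  have hface := face_eq hP huniv h
  constructor
  · intro _
    refine ⟨h, ?_⟩
    show hullS p (argmaxSet p Finset.univ h) = _
    rw [hface, body_eq]
  · intro heq
    apply hne
    have h1 := extremePoints_hullS hP (argmaxSet p Finset.univ h)
    have h2 := extremePoints_hullS hP (Finset.univ : Finset V)
    have heq' : hullS p (argmaxSet p Finset.univ h) = hullS p Finset.univ := by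
      rw [← body_eq]; exact heq
    exact hullS_inj hP heq' 

lemma exists_functional (hP : IsPolytope p) {S : Finset V} (hB : IsBdryFace p S)
    (hS : S.Nonempty) : ∃ h : EuclideanSpace ℝ (Fin d) →L[ℝ] ℝ,
    S = argmaxSet p Finset.univ h := by
  classical
  have : Nonempty V := V_nonempty hP
  obtain ⟨v, hv⟩ := hS
  have hne : (convexHull ℝ (p '' (S : Set V))).Nonempty := ⟨p v, mem_hullS hv⟩
  obtain ⟨l, hl⟩ := hB.1 hne
  refine ⟨l, hullS_inj hP ?_⟩
  rw [face_eq hP Finset.univ_nonempty l, ← body_eq]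
  exact hl

lemma faceSet_argmax (hP : IsPolytope p) {S : Finset V} (hFS : IsFaceSet p S)
    (h : EuclideanSpace ℝ (Fin d) →L[ℝ] ℝ) (hne : argmaxSet p S h ≠ S) :
    IsBdryFace p (argmaxSet p S h) := by
  classical
  rcases hFS with rfl | hB
  · exact bdry_of_argmax hP hne
  · have hSne : S.Nonempty := by
      rcases Finset.eq_empty_or_nonempty S with rfl | hne'
      · exact absurd (by simp [argmaxSet]) hne
      · exact hne'
    obtain ⟨f, hf⟩ := exists_functional hP hB hSne
    set T := argmaxSet p S h with hT
    obtain ⟨v₀, hv₀⟩ := argmaxSet_nonempty hSne h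
    have hv₀S : v₀ ∈ S := (mem_argmaxSet.1 hv₀).1
    set Mf := f (p v₀) with hMf
    set Mh := h (p v₀) with hMh
    have hfS : ∀ u ∈ S, f (p u) = Mf := by
      intro u hu
      exact argmax_const (hf ▸ hu) (hf ▸ hv₀S)
    have hfub : ∀ u : V, f (p u) ≤ Mf := by
      intro u
      have := (mem_argmaxSet.1 (hf ▸ hv₀S)).2
      exact this u (Finset.mem_univ u)
    have hflt : ∀ u : V, u ∉ S → f (p u) < Mf := by
      intro u hu
      rcases lt_or_eq_of_le (hfub u) with hlt | heq
      · exact hlt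
      · exfalso
        apply hu
        rw [hf, mem_argmaxSet]
        exact ⟨Finset.mem_univ u, fun z _ => heq.symm ▸ hfub z⟩
    have hhub : ∀ u ∈ S, h (p u) ≤ Mh := (mem_argmaxSet.1 hv₀).2
    have hhlt : ∀ u ∈ S, u ∉ T → h (p u) < Mh := by
      intro u hu huT
      rcases lt_or_eq_of_le (hhub u hu) with hlt | heq
      · exact hlt
      · exact absurd (mem_argmaxSet.2 ⟨hu, fun z hz => heq.symm ▸ hhub z hz⟩) huT
    obtain ⟨ε, hε, hεlt⟩ := exists_pos_forall_mul_lt (Finset.univ \ S)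
      (fun u => Mf - f (p u)) (fun u => h (p u) - Mh)
      (fun u hu => by
        have := hflt u (by simpa using (Finset.mem_sdiff.1 hu).2)
        show 0 < Mf - f (p u)
        linarith)
    set h' : EuclideanSpace ℝ (Fin d) →L[ℝ] ℝ := f + ε • h with hh'
    have hval : ∀ u : V, h' (p u) = f (p u) + ε * h (p u) := by
      intro u; simp [hh', ContinuousLinearMap.add_apply, ContinuousLinearMap.smul_apply,
        smul_eq_mul]
    have hle : ∀ u : V, h' (p u) ≤ Mf + ε * Mh := by
      intro u
      rw [hval]
      by_cases huS : u ∈ S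
      · have h1 := hfS u huS
        have h2 := hhub u huS
        nlinarith
      · have h3 : ε * (h (p u) - Mh) < Mf - f (p u) :=
          hεlt u (Finset.mem_sdiff.2 ⟨Finset.mem_univ u, huS⟩)
        nlinarith
    have heqiff : ∀ u : V, h' (p u) = Mf + ε * Mh ↔ u ∈ T := by
      intro u
      constructor
      · intro hequ
        by_cases huS : u ∈ S
        · by_contra huT
          have := hhlt u huS huT
          have h1 := hfS u huS
          rw [hval] at hequ
          nlinarith
        · have h3 : ε * (h (p u) - Mh) < Mf - f (p u) :=
            hεlt u (Finset.mem_sdiff.2 ⟨Finset.mem_univ u, huS⟩)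
          rw [hval] at hequ
          nlinarith
      · intro huT
        have huS := Finset.mem_of_mem_filter u huT
        have h1 := hfS u huS
        have h2 : h (p u) = Mh := argmax_const huT hv₀
        rw [hval, h1, h2]
    have hkey : argmaxSet p Finset.univ h' = T := by
      ext u
      rw [mem_argmaxSet]
      constructor
      · rintro ⟨-, hmax⟩
        rw [← heqiff]
        have h1 : h' (p v₀) = Mf + ε * Mh := (heqiff v₀).2 hv₀
        have h2 := hmax v₀ (Finset.mem_univ v₀)
        have h3 := hle u
        linarith
      · intro huT
        refine ⟨Finset.mem_univ u, fun z _ => ?_⟩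
        rw [(heqiff u).2 huT]
        exact hle z
    have hTuniv : T ≠ Finset.univ := by
      intro hTu
      apply hne
      apply Finset.Subset.antisymm (argmaxSet_subset S h)
      rw [← hT, hTu]
      exact Finset.subset_univ S
    rw [← hkey] at hTuniv ⊢
    exact bdry_of_argmax hP hTuniv

/- ---------- dimension lemmas ---------- -/

lemma dim_lt (hP : IsPolytope p) {S : Finset V} {h : EuclideanSpace ℝ (Fin d) →L[ℝ] ℝ}
    {v w : V} (hv : v ∈ S) (hw : w ∈ S) (hne : h (p v) ≠ h (p w)) :
    Module.finrank ℝ (vectorSpan ℝ (p '' ((argmaxSet p S h : Finset V) : Set V))) <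
      Module.finrank ℝ (vectorSpan ℝ (p '' (S : Set V))) := by
  classical
  set T := argmaxSet p S h with hT
  set U := vectorSpan ℝ (p '' (S : Set V)) with hU
  have hMv : ∀ a ∈ T, ∀ b ∈ T, h (p a) = h (p b) := fun a ha b hb => argmax_const ha hb
  have h1 : vectorSpan ℝ (p '' ((T : Finset V) : Set V)) ≤ U ⊓ LinearMap.ker (h : EuclideanSpace ℝ (Fin d) →ₗ[ℝ] ℝ) := by
    apply le_inf
    · exact vectorSpan_mono ℝ (Set.image_mono (by exact_mod_cast argmaxSet_subset S h))
    · rw [vectorSpan_def, Submodule.span_le]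
      rintro x hx
      rw [Set.mem_vsub] at hx
      obtain ⟨y, hy, z, hz, rfl⟩ := hx
      obtain ⟨a, ha, rfl⟩ := hy
      obtain ⟨b, hb, rfl⟩ := hz
      have : h (p a) = h (p b) := hMv a (by exact_mod_cast ha) b (by exact_mod_cast hb)
      simp only [SetLike.mem_coe, LinearMap.mem_ker, vsub_eq_sub]
      rw [map_sub]
      simpa [sub_eq_zero] using this
  have hu₀ : p v - p w ∈ U := by
    have hmv : p v ∈ p '' (S : Set V) := ⟨v, by exact_mod_cast hv, rfl⟩
    have hmw : p w ∈ p '' (S : Set V) := ⟨w, by exact_mod_cast hw, rfl⟩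
    have := vsub_mem_vectorSpan ℝ hmv hmw
    simpa [vsub_eq_sub] using this
  have hu₀k : p v - p w ∉ LinearMap.ker (h : EuclideanSpace ℝ (Fin d) →ₗ[ℝ] ℝ) := by
    simp only [LinearMap.mem_ker]
    intro h0
    rw [ContinuousLinearMap.coe_coe, map_sub, sub_eq_zero] at h0
    exact hne h0
  have h2 : U ⊓ LinearMap.ker (h : EuclideanSpace ℝ (Fin d) →ₗ[ℝ] ℝ) < U := by
    apply lt_of_le_of_ne inf_le_left
    intro heq
    have : U ≤ LinearMap.ker (h : EuclideanSpace ℝ (Fin d) →ₗ[ℝ] ℝ) := by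
      rw [← heq]; exact inf_le_right
    exact hu₀k (this hu₀)
  exact lt_of_le_of_lt (Submodule.finrank_mono h1) (Submodule.finrank_lt_finrank_of_lt h2)

lemma card_le_one_of_dim0 (hP : IsPolytope p) {S : Finset V}
    (hd : Module.finrank ℝ (vectorSpan ℝ (p '' (S : Set V))) = 0) : S.card ≤ 1 := by
  classical
  have hbot : vectorSpan ℝ (p '' (S : Set V)) = ⊥ := Submodule.finrank_eq_zero.1 hd
  rw [Finset.card_le_one]
  intro a ha b hb
  have hmem : p a - p b ∈ vectorSpan ℝ (p '' (S : Set V)) := by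
    have hma : p a ∈ p '' (S : Set V) := ⟨a, by exact_mod_cast ha, rfl⟩
    have hmb : p b ∈ p '' (S : Set V) := ⟨b, by exact_mod_cast hb, rfl⟩
    have := vsub_mem_vectorSpan ℝ hma hmb
    simpa [vsub_eq_sub] using this
  rw [hbot, Submodule.mem_bot, sub_eq_zero] at hmem
  exact hP.inj hmem

lemma card_le_two_of_dim1 (hP : IsPolytope p) {S : Finset V}
    (hd : Module.finrank ℝ (vectorSpan ℝ (p '' (S : Set V))) ≤ 1) : S.card ≤ 2 := by
  classical
  by_contra hc
  push_neg at hc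
  obtain ⟨a, b, c, ha, hb, hkc, hab, hac, hbc⟩ := Finset.two_lt_card_iff.1 hc
  have hcol : Collinear ℝ (p '' (S : Set V)) := collinear_iff_finrank_le_one.2 hd
  have hsub : Collinear ℝ ({p a, p b, p c} : Set (EuclideanSpace ℝ (Fin d))) := by
    apply hcol.subset
    rintro x (rfl | rfl | rfl)
    · exact ⟨a, by exact_mod_cast ha, rfl⟩
    · exact ⟨b, by exact_mod_cast hb, rfl⟩
    · exact ⟨c, by exact_mod_cast hkc, rfl⟩
  have hex : ∀ x y z : V, x ∈ S → y ∈ S → z ∈ S → x ≠ y → y ≠ z → x ≠ z →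
      Wbtw ℝ (p x) (p y) (p z) → False := by
    intro x y z hx hy hz hxy hyz hxz hw
    have hyx : p y ≠ p x := fun h => hxy (hP.inj h.symm)
    have hyz' : p y ≠ p z := fun h => hyz (hP.inj h)
    have hop : p y ∈ openSegment ℝ (p x) (p z) := by
      have hs := hw.mem_segment
      rw [← insert_endpoints_openSegment] at hs
      rcases hs with h1 | h1 | h1
      · exact absurd h1 hyx
      · exact absurd h1 hyz'
      · exact h1
    have hext : p y ∈ (hullS p S).extremePoints ℝ := by
      rw [extremePoints_hullS hP]
      exact ⟨y, by exact_mod_cast hy, rfl⟩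
    have := hext.2 (mem_hullS hx) (mem_hullS hz) hop
    exact hyx this.symm
  rcases hsub.wbtw_or_wbtw_or_wbtw with hw | hw | hw
  · exact hex a b c ha hb hkc hab hbc hac hw
  · exact hex b c a hb hkc ha hbc (Ne.symm hac) (Ne.symm hab) hw
  · exact hex c a b hkc ha hb (Ne.symm hac) hab (Ne.symm hbc) hw

/- ---------- the improving-edge lemma ---------- -/

lemma improving (hP : IsPolytope p) :
    ∀ n : ℕ, ∀ S : Finset V, Module.finrank ℝ (vectorSpan ℝ (p '' (S : Set V))) = n →
    IsFaceSet p S → (IsBdryFace p S ∨ 2 ≤ n) →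
    ∀ ℓ : EuclideanSpace ℝ (Fin d) →L[ℝ] ℝ, ∀ v ∈ S, ∀ w ∈ S, ℓ (p v) < ℓ (p w) →
    ∃ u ∈ S, (polyGraph p).Adj v u ∧ ℓ (p v) < ℓ (p u) := by
  classical
  intro n
  induction n using Nat.strong_induction_on with
  | _ n IH =>
  intro S hdim hFS hBig ℓ v hv w hw hlt
  have hvw : v ≠ w := fun h => by subst h; exact lt_irrefl _ hlt
  by_cases hn1 : n ≤ 1
  · -- base case : `S` is a proper edge or vertex
    have hB : IsBdryFace p S := by
      rcases hBig with hB | h2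
      · exact hB
      · omega
    have hcard : S.card ≤ 2 := card_le_two_of_dim1 hP (by rw [hdim]; exact hn1)
    have hsub : ({v, w} : Finset V) ⊆ S := by
      intro z hz
      rcases Finset.mem_insert.1 hz with rfl | hz
      · exact hv
      · rw [Finset.mem_singleton.1 hz]; exact hw
    have hSeq : ({v, w} : Finset V) = S :=
      Finset.eq_of_subset_of_card_le hsub (by rw [Finset.card_pair hvw]; exact hcard)
    refine ⟨w, hw, ⟨hvw, ?_⟩, hlt⟩
    rw [hSeq]
    exact hB
  · -- inductive step
    push_neg at hn1
    set U := vectorSpan ℝ (p '' (S : Set V)) with hU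
    have hUdim : Module.finrank ℝ U = n := hdim
    -- a nonzero vector of `U` on which `ℓ` vanishes
    set ℓU : U →ₗ[ℝ] ℝ := (ℓ : EuclideanSpace ℝ (Fin d) →ₗ[ℝ] ℝ).comp U.subtype with hℓU
    have hrn := LinearMap.finrank_range_add_finrank_ker ℓU
    have hr1 : Module.finrank ℝ (LinearMap.range ℓU) ≤ 1 := by
      have := Submodule.finrank_le (LinearMap.range ℓU)
      simpa using this
    have hker : LinearMap.ker ℓU ≠ ⊥ := by
      intro hbot
      rw [hbot, finrank_bot, add_zero] at hrn
      rw [hUdim] at hrn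
      omega
    obtain ⟨b, hbker, hb0⟩ := Submodule.exists_mem_ne_zero_of_ne_bot hker
    set u₁ : EuclideanSpace ℝ (Fin d) := (b : EuclideanSpace ℝ (Fin d)) with hu₁
    have hu₁U : u₁ ∈ U := b.2
    have hu₁0 : u₁ ≠ 0 := by
      intro h
      rw [hu₁] at h
      exact hb0 (Subtype.ext (by simpa using h))
    have hℓu₁ : ℓ u₁ = 0 := by
      have h0 := LinearMap.mem_ker.1 hbker
      rw [hℓU, LinearMap.comp_apply] at h0
      simpa using h0
    set ψ : EuclideanSpace ℝ (Fin d) →L[ℝ] ℝ := innerSL ℝ u₁ with hψ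
    have hψu₁ : ψ u₁ ≠ 0 := by
      intro h
      apply hu₁0
      simp only [hψ, innerSL_apply_apply] at h
      exact inner_self_eq_zero.1 h
    -- exposing functional at `v`
    obtain ⟨g₀, hg₀⟩ := vertex_exposed hP hv
    -- badness : for some `t ≥ 0` the functional `g₀ + δ ψ + t ℓ` kills `U`
    set Bad : ℝ → Prop := fun δ => ∃ t : ℝ, 0 ≤ t ∧ ∀ x ∈ U, g₀ x + δ * ψ x + t * ℓ x = 0
      with hBadDef
    have hBadUnique : ∀ δ₁ δ₂, Bad δ₁ → Bad δ₂ → δ₁ = δ₂ := by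
      rintro δ₁ δ₂ ⟨t₁, -, h₁⟩ ⟨t₂, -, h₂⟩
      have e₁ := h₁ u₁ hu₁U
      have e₂ := h₂ u₁ hu₁U
      rw [hℓu₁] at e₁ e₂
      have : δ₁ * ψ u₁ = δ₂ * ψ u₁ := by linarith
      exact mul_right_cancel₀ hψu₁ this
    -- choose a small good δ
    obtain ⟨ε, hε, hεlt⟩ := exists_pos_forall_mul_lt (S.erase v)
      (fun u => g₀ (p v) - g₀ (p u)) (fun u => ψ (p u) - ψ (p v))
      (fun u hu => by
        have := hg₀ u (Finset.mem_of_mem_erase hu) (Finset.ne_of_mem_erase hu)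
        show 0 < g₀ (p v) - g₀ (p u)
        linarith)
    have hhalf : ∀ u ∈ S.erase v, (ε / 2) * (ψ (p u) - ψ (p v)) < g₀ (p v) - g₀ (p u) := by
      intro u hu
      refine half_lt_of_mul_lt hε (hεlt u hu) ?_
      have := hg₀ u (Finset.mem_of_mem_erase hu) (Finset.ne_of_mem_erase hu)
      linarith
    obtain ⟨δ, hδ, hδS, hδgood⟩ :
        ∃ δ : ℝ, 0 < δ ∧ (∀ u ∈ S.erase v, δ * (ψ (p u) - ψ (p v)) < g₀ (p v) - g₀ (p u)) ∧
          ¬ Bad δ := by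
      by_cases hbadε : Bad ε
      · refine ⟨ε / 2, by linarith, hhalf, fun hbad => ?_⟩
        have := hBadUnique _ _ hbad hbadε
        linarith
      · exact ⟨ε, hε, hεlt, hbadε⟩
    set g : EuclideanSpace ℝ (Fin d) →L[ℝ] ℝ := g₀ + δ • ψ with hg
    have hgval : ∀ x, g x = g₀ x + δ * ψ x := by
      intro x; simp [hg, ContinuousLinearMap.add_apply, ContinuousLinearMap.smul_apply,
        smul_eq_mul]
    have hgexp : ∀ u ∈ S, u ≠ v → g (p u) < g (p v) := by
      intro u hu hne
      have := hδS u (Finset.mem_erase.2 ⟨hne, hu⟩)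
      rw [hgval, hgval]
      linarith
    -- the pivot value t*
    set R : Finset V := S.filter (fun u => ℓ (p v) < ℓ (p u)) with hR
    have hwR : w ∈ R := Finset.mem_filter.2 ⟨hw, hlt⟩
    have hRne : R.Nonempty := ⟨w, hwR⟩
    set ratio : V → ℝ := fun u => (g (p v) - g (p u)) / (ℓ (p u) - ℓ (p v)) with hratio
    set tstar : ℝ := (R.image ratio).min' (hRne.image ratio) with htstar
    obtain ⟨w₁, hw₁R, hw₁ratio⟩ := Finset.mem_image.1 ((R.image ratio).min'_mem (hRne.image ratio))
    have htstar_eq : tstar = ratio w₁ := by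
      rw [htstar]; exact hw₁ratio.symm
    have hratio_pos : ∀ u ∈ R, 0 < ratio u := by
      intro u hu
      have huS := Finset.mem_of_mem_filter u hu
      have hℓu : ℓ (p v) < ℓ (p u) := (Finset.mem_filter.1 hu).2
      have hnev : u ≠ v := fun h => by subst h; exact lt_irrefl _ hℓu
      have := hgexp u huS hnev
      exact div_pos (by linarith) (by linarith)
    have htstar_pos : 0 < tstar := by
      rw [htstar_eq]
      exact hratio_pos w₁ hw₁R
    have htstar_le : ∀ u ∈ R, tstar ≤ ratio u := fun u hu =>
      Finset.min'_le _ _ (Finset.mem_image_of_mem ratio hu)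
    set F : EuclideanSpace ℝ (Fin d) →L[ℝ] ℝ := g + tstar • ℓ with hF
    have hFval : ∀ x, F x = g x + tstar * ℓ x := by
      intro x; simp [hF, ContinuousLinearMap.add_apply, ContinuousLinearMap.smul_apply,
        smul_eq_mul]
    have hmax : ∀ u ∈ S, F (p u) ≤ F (p v) := by
      intro u hu
      rcases eq_or_ne u v with rfl | hne
      · exact le_rfl
      rw [hFval, hFval]
      by_cases huR : u ∈ R
      · have h1 := htstar_le u huR
        have hden : 0 < ℓ (p u) - ℓ (p v) := by
          have := (Finset.mem_filter.1 huR).2; linarith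
        rw [hratio] at h1
        have h2 : tstar * (ℓ (p u) - ℓ (p v)) ≤ g (p v) - g (p u) :=
          (le_div_iff₀ hden).1 h1
        nlinarith
      · have hℓle : ℓ (p u) ≤ ℓ (p v) := by
          by_contra hgt
          exact huR (Finset.mem_filter.2 ⟨hu, by linarith⟩)
        have := hgexp u hu hne
        nlinarith
    set T : Finset V := argmaxSet p S F with hT
    have hvT : v ∈ T := mem_argmaxSet.2 ⟨hv, hmax⟩
    have hw₁S : w₁ ∈ S := Finset.mem_of_mem_filter w₁ hw₁R
    have hw₁lt : ℓ (p v) < ℓ (p w₁) := (Finset.mem_filter.1 hw₁R).2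
    have hw₁eq : F (p w₁) = F (p v) := by
      have hden : ℓ (p w₁) - ℓ (p v) ≠ 0 := by linarith
      have : g (p v) - g (p w₁) = tstar * (ℓ (p w₁) - ℓ (p v)) := by
        rw [htstar_eq, hratio]
        field_simp
      rw [hFval, hFval]
      linarith [this]
    have hw₁T : w₁ ∈ T := mem_argmaxSet.2 ⟨hw₁S, fun z hz => (hmax z hz).trans hw₁eq.ge⟩
    have hTne : T ≠ S := by
      intro hTS
      apply hδgood
      refine ⟨tstar, htstar_pos.le, ?_⟩
      have hconst : ∀ u ∈ S, F (p u) = F (p v) := by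
        intro u hu
        have huT : u ∈ T := hTS ▸ hu
        exact argmax_const huT hvT
      have hUle : U ≤ LinearMap.ker (F : EuclideanSpace ℝ (Fin d) →ₗ[ℝ] ℝ) := by
        rw [hU, vectorSpan_def, Submodule.span_le]
        rintro x hx
        rw [Set.mem_vsub] at hx
        obtain ⟨y, hy, z, hz, rfl⟩ := hx
        obtain ⟨a, ha, rfl⟩ := hy
        obtain ⟨c, hc, rfl⟩ := hz
        have h1 : F (p a) = F (p c) := by
          rw [hconst a (by exact_mod_cast ha), hconst c (by exact_mod_cast hc)]
        simp only [SetLike.mem_coe, LinearMap.mem_ker, vsub_eq_sub]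
        rw [ContinuousLinearMap.coe_coe, map_sub, sub_eq_zero]
        exact h1
      intro x hxU
      have : F x = 0 := hUle hxU
      rw [hFval, hgval] at this
      linarith
    have hTB : IsBdryFace p T := faceSet_argmax hP hFS F hTne
    obtain ⟨u₂, hu₂S, hu₂T⟩ : ∃ u₂ ∈ S, u₂ ∉ T := by
      by_contra hno
      push_neg at hno
      exact hTne (Finset.Subset.antisymm (argmaxSet_subset S F) hno)
    have hu₂ne : F (p v) ≠ F (p u₂) := by
      intro heq
      exact hu₂T (mem_argmaxSet.2 ⟨hu₂S, fun z hz => (hmax z hz).trans heq.le⟩)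
    have hm : Module.finrank ℝ (vectorSpan ℝ (p '' ((T : Finset V) : Set V))) < n := by
      rw [← hdim]
      exact dim_lt hP hv hu₂S hu₂ne
    obtain ⟨u, huT, hadj, hlt'⟩ := IH _ hm T rfl (Or.inr hTB) (Or.inl hTB) ℓ v hvT w₁ hw₁T hw₁lt
    exact ⟨u, argmaxSet_subset S F huT, hadj, hlt'⟩


/- ---------- graph plumbing ---------- -/

lemma reachable_mono {X Y : Set V} (hXY : X ⊆ Y) {a b : ↥X}
    (h : ((polyGraph p).induce X).Reachable a b) :
    ((polyGraph p).induce Y).Reachable ⟨a.1, hXY a.2⟩ ⟨b.1, hXY b.2⟩ :=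
  h.map (SimpleGraph.induceHomOfLE (polyGraph p) hXY).toHom

lemma conn_pair (hP : IsPolytope p) {T : Finset V} (hB : IsBdryFace p T)
    (hne : T.Nonempty) (hcard : T.card ≤ 2) :
    ((polyGraph p).induce (T : Set V)).Connected := by
  classical
  rw [SimpleGraph.connected_iff]
  constructor
  · intro x y
    rcases Nat.lt_or_ge T.card 2 with h1 | h2
    · have hxy : (x : V) = (y : V) := by
        have hc1 : T.card ≤ 1 := by omega
        rw [Finset.card_le_one] at hc1
        exact hc1 _ (by exact_mod_cast x.2) _ (by exact_mod_cast y.2)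
      have hxy' : x = y := Subtype.ext hxy
      rw [hxy']
    · have hc2 : T.card = 2 := le_antisymm hcard h2
      obtain ⟨a, b, hab, hTeq⟩ := Finset.card_eq_two.1 hc2
      have hadj : (polyGraph p).Adj a b := ⟨hab, by rw [← hTeq]; exact hB⟩
      have hmem : ∀ z : ↥((T : Finset V) : Set V), (z : V) = a ∨ (z : V) = b := by
        intro z
        have hz : (z : V) ∈ T := by exact_mod_cast z.2
        have hz2 : (z : V) ∈ ({a, b} : Finset V) := hTeq ▸ hz
        simpa using hz2
      have hreach : ∀ (z z' : ↥((T : Finset V) : Set V)), (z : V) = a → (z' : V) = b →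
          ((polyGraph p).induce (T : Set V)).Adj z z' := by
        intro z z' hz hz'
        show (polyGraph p).Adj (z : V) (z' : V)
        rw [hz, hz']
        exact hadj
      rcases hmem x with hx | hx <;> rcases hmem y with hy | hy
      · rw [Subtype.ext (hx.trans hy.symm)]
      · exact (hreach x y hx hy).reachable
      · exact ((hreach y x hy hx).reachable).symm
      · rw [Subtype.ext (hx.trans hy.symm)]
  · obtain ⟨v, hv⟩ := hne
    exact ⟨⟨v, by exact_mod_cast hv⟩⟩

/- ---------- monotone walks ---------- -/

lemma reach_down (hP : IsPolytope p) {S : Finset V} {n : ℕ}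
    (hdim : Module.finrank ℝ (vectorSpan ℝ (p '' (S : Set V))) = n)
    (hFS : IsFaceSet p S) (hBig : IsBdryFace p S ∨ 2 ≤ n)
    (ℓ : EuclideanSpace ℝ (Fin d) →L[ℝ] ℝ) (W : Set V) (c : ℝ)
    (hWlow : ∀ z ∈ S, ℓ (p z) < c → z ∉ W) :
    ∀ k : ℕ, ∀ u : V, (S.filter fun z => ℓ (p z) < ℓ (p u)).card ≤ k →
      ∀ (_ : u ∈ S) (_ : u ∉ W) (_ : ℓ (p u) ≤ c),
      ∃ t, t ∈ argmaxSet p S (-ℓ) ∧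
        ∃ (h1 : u ∈ ((S : Set V) \ W)) (h2 : t ∈ ((S : Set V) \ W)),
        ((polyGraph p).induce ((S : Set V) \ W)).Reachable ⟨u, h1⟩ ⟨t, h2⟩ := by
  intro k
  induction k with
  | zero =>
    intro u hcard hu huW huc
    have hmin : ∀ z ∈ S, ℓ (p u) ≤ ℓ (p z) := by
      intro z hz
      by_contra hzu
      push_neg at hzu
      have hzf : z ∈ S.filter fun z => ℓ (p z) < ℓ (p u) := Finset.mem_filter.2 ⟨hz, hzu⟩
      have := Finset.card_pos.2 ⟨z, hzf⟩
      omega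
    refine ⟨u, mem_argmaxSet.2 ⟨hu, fun z hz => ?_⟩, ⟨Finset.mem_coe.2 hu, huW⟩,
      ⟨Finset.mem_coe.2 hu, huW⟩, SimpleGraph.Reachable.refl _⟩
    simp only [ContinuousLinearMap.neg_apply, neg_le_neg_iff]
    exact hmin z hz
  | succ k ih =>
    intro u hcard hu huW huc
    by_cases hmin : ∀ z ∈ S, ℓ (p u) ≤ ℓ (p z)
    · refine ⟨u, mem_argmaxSet.2 ⟨hu, fun z hz => ?_⟩, ⟨Finset.mem_coe.2 hu, huW⟩,
        ⟨Finset.mem_coe.2 hu, huW⟩, SimpleGraph.Reachable.refl _⟩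
      simp only [ContinuousLinearMap.neg_apply, neg_le_neg_iff]
      exact hmin z hz
    · push_neg at hmin
      obtain ⟨z, hz, hzu⟩ := hmin
      obtain ⟨u₁, hu₁S, hadj, hlt⟩ := improving hP n S hdim hFS hBig (-ℓ) u hu z hz
        (by simp only [ContinuousLinearMap.neg_apply]; linarith)
      have hℓ₁ : ℓ (p u₁) < ℓ (p u) := by
        simp only [ContinuousLinearMap.neg_apply] at hlt
        linarith
      have hu₁W : u₁ ∉ W := hWlow u₁ hu₁S (lt_of_lt_of_le hℓ₁ huc)
      have hsubset : (S.filter fun z => ℓ (p z) < ℓ (p u₁)) ⊆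
          S.filter fun z => ℓ (p z) < ℓ (p u) := by
        intro z' hz'
        have hmem := Finset.mem_filter.1 hz'
        exact Finset.mem_filter.2 ⟨hmem.1, lt_trans hmem.2 hℓ₁⟩
      have hss : (S.filter fun z => ℓ (p z) < ℓ (p u₁)) ⊂
          S.filter fun z => ℓ (p z) < ℓ (p u) := by
        rw [Finset.ssubset_iff_of_subset hsubset]
        exact ⟨u₁, Finset.mem_filter.2 ⟨hu₁S, hℓ₁⟩, fun hmem =>
          lt_irrefl _ (Finset.mem_filter.1 hmem).2⟩
      have hcard' : (S.filter fun z => ℓ (p z) < ℓ (p u₁)).card ≤ k := by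
        have := Finset.card_lt_card hss
        omega
      obtain ⟨t, ht, h1, h2, hr⟩ := ih u₁ hcard' hu₁S hu₁W (le_of_lt (lt_of_lt_of_le hℓ₁ huc))
      refine ⟨t, ht, ⟨Finset.mem_coe.2 hu, huW⟩, h2, ?_⟩
      have hadj' : ((polyGraph p).induce ((S : Set V) \ W)).Adj
          ⟨u, ⟨Finset.mem_coe.2 hu, huW⟩⟩ ⟨u₁, h1⟩ := hadj
      exact hadj'.reachable.trans hr

/- ---------- orthogonal functional ---------- -/

lemma exists_perp {K U' : Submodule ℝ (EuclideanSpace ℝ (Fin d))} (hKU : K ≤ U')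
    (hlt : Module.finrank ℝ K < Module.finrank ℝ U') :
    ∃ c₀ : EuclideanSpace ℝ (Fin d), c₀ ∈ U' ∧ c₀ ≠ 0 ∧
      ∀ x ∈ K, (inner ℝ c₀ x : ℝ) = 0 := by
  have hsum := Submodule.finrank_add_inf_finrank_orthogonal hKU
  have hne : Kᗮ ⊓ U' ≠ ⊥ := by
    intro h
    rw [h, finrank_bot] at hsum
    omega
  obtain ⟨c₀, hc₀, h0⟩ := Submodule.exists_mem_ne_zero_of_ne_bot hne
  rw [Submodule.mem_inf] at hc₀
  refine ⟨c₀, hc₀.2, h0, fun x hx => ?_⟩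
  have h1 := (Submodule.mem_orthogonal K c₀).1 hc₀.1 x hx
  rw [real_inner_comm] at h1
  exact h1

/- ---------- connecting along the low side ---------- -/

lemma connect_low (hP : IsPolytope p) {S : Finset V} {n : ℕ}
    (hFS : IsFaceSet p S)
    (hdim : Module.finrank ℝ (vectorSpan ℝ (p '' (S : Set V))) = n)
    (hn2 : 2 ≤ n) (ℓ : EuclideanSpace ℝ (Fin d) →L[ℝ] ℝ) (c : ℝ) (W : Set V)
    (connFaces : ∀ T : Finset V, IsBdryFace p T → T.Nonempty →
      Module.finrank ℝ (vectorSpan ℝ (p '' (T : Set V))) < n →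
      ((polyGraph p).induce (T : Set V)).Connected)
    (hWc : ∀ z ∈ S, z ∈ W → ℓ (p z) = c)
    (hnc : ∃ z₁ ∈ S, ∃ z₂ ∈ S, ℓ (p z₂) < ℓ (p z₁))
    (hbelow : ∃ z ∈ S, ℓ (p z) < c)
    {x y : V} (hxS : x ∈ S) (hxW : x ∉ W) (hxc : ℓ (p x) ≤ c)
    (hyS : y ∈ S) (hyW : y ∉ W) (hyc : ℓ (p y) ≤ c) :
    ∃ (h1 : x ∈ ((S : Set V) \ W)) (h2 : y ∈ ((S : Set V) \ W)),
      ((polyGraph p).induce ((S : Set V) \ W)).Reachable ⟨x, h1⟩ ⟨y, h2⟩ := by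
  classical
  obtain ⟨zb, hzbS, hzb⟩ := hbelow
  obtain ⟨z₁, hz₁, z₂, hz₂, hz12⟩ := hnc
  set Tmin := argmaxSet p S (-ℓ) with hTmin
  have hBigS : IsBdryFace p S ∨ 2 ≤ n := Or.inr hn2
  have hWlow : ∀ z ∈ S, ℓ (p z) < c → z ∉ W := fun z hz hlt hw => by
    have := hWc z hz hw; linarith
  have hTminlow : ∀ t ∈ Tmin, ℓ (p t) < c := by
    intro t ht
    have h := (mem_argmaxSet.1 ht).2 zb hzbS
    simp only [ContinuousLinearMap.neg_apply, neg_le_neg_iff] at h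
    linarith
  have hTminsub : ((Tmin : Finset V) : Set V) ⊆ ((S : Set V) \ W) := by
    intro t ht
    have htS : t ∈ S := argmaxSet_subset S (-ℓ) (by exact_mod_cast ht)
    exact ⟨Finset.mem_coe.2 htS, hWlow t htS (hTminlow t (by exact_mod_cast ht))⟩
  have hTminne : Tmin.Nonempty := argmaxSet_nonempty ⟨zb, hzbS⟩ _
  have hTminS : Tmin ≠ S := by
    intro hEq
    have hz₁' : z₁ ∈ Tmin := by rw [hEq]; exact hz₁
    have h := (mem_argmaxSet.1 hz₁').2 z₂ hz₂
    simp only [ContinuousLinearMap.neg_apply, neg_le_neg_iff] at h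
    linarith
  have hTminB := faceSet_argmax hP hFS (-ℓ) hTminS
  have hTmindim : Module.finrank ℝ (vectorSpan ℝ (p '' ((Tmin : Finset V) : Set V))) < n := by
    rw [← hdim]
    apply dim_lt hP hz₁ hz₂
    simp only [ContinuousLinearMap.neg_apply]
    intro h
    have : ℓ (p z₁) = ℓ (p z₂) := by linarith
    linarith
  have hConnM := connFaces Tmin hTminB hTminne hTmindim
  obtain ⟨t, ht, h1, h2, hr⟩ := reach_down hP hdim hFS hBigS ℓ W c hWlow _ x le_rfl hxS hxW hxc
  obtain ⟨t', ht', h1', h2', hr'⟩ := reach_down hP hdim hFS hBigS ℓ W c hWlow _ y le_rfl hyS hyW hyc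
  have htt0 := hConnM.preconnected ⟨t, Finset.mem_coe.2 ht⟩ ⟨t', Finset.mem_coe.2 ht'⟩
  have htt := reachable_mono hTminsub htt0
  exact ⟨h1, h1', hr.trans (htt.trans hr'.symm)⟩

/- ---------- the main induction ---------- -/

lemma main (hP : IsPolytope p) :
    ∀ n : ℕ, ∀ S : Finset V, IsFaceSet p S →
      Module.finrank ℝ (vectorSpan ℝ (p '' (S : Set V))) = n →
      ∀ W : Set V, Module.finrank ℝ (vectorSpan ℝ (p '' (W ∩ (S : Set V)))) + 2 ≤ n →
      ((polyGraph p).induce ((S : Set V) \ W)).Connected := by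
  classical
  intro n
  induction n using Nat.strong_induction_on with
  | _ n IH =>
  intro S hFS hdim W hWdim
  have hn2 : 2 ≤ n := le_trans (by omega) hWdim
  obtain ⟨a, haS, haW⟩ : ∃ a ∈ S, a ∉ W := by
    by_contra hno
    push_neg at hno
    have hWS : W ∩ (S : Set V) = (S : Set V) :=
      Set.inter_eq_self_of_subset_right (fun z hz => hno z (Finset.mem_coe.1 hz))
    rw [hWS, hdim] at hWdim
    omega
  have connFaces : ∀ T : Finset V, IsBdryFace p T → T.Nonempty →
      Module.finrank ℝ (vectorSpan ℝ (p '' (T : Set V))) < n →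
      ((polyGraph p).induce (T : Set V)).Connected := by
    intro T hTB hTne hTdim
    by_cases hm2 : 2 ≤ Module.finrank ℝ (vectorSpan ℝ (p '' (T : Set V)))
    · have h0 : Module.finrank ℝ (vectorSpan ℝ (p '' ((∅ : Set V) ∩ (T : Set V)))) + 2 ≤
          Module.finrank ℝ (vectorSpan ℝ (p '' (T : Set V))) := by
        rw [Set.empty_inter, Set.image_empty, vectorSpan_empty, finrank_bot]
        omega
      have hthis := IH _ hTdim T (Or.inr hTB) rfl ∅ h0
      rwa [Set.diff_empty] at hthis
    · push_neg at hm2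
      exact conn_pair hP hTB hTne (card_le_two_of_dim1 hP (by omega))
  set U := vectorSpan ℝ (p '' (S : Set V)) with hU
  obtain ⟨K, hKU, hKdim, hKW⟩ : ∃ K : Submodule ℝ (EuclideanSpace ℝ (Fin d)),
      K ≤ U ∧ Module.finrank ℝ K ≤ n - 1 ∧ ∀ z ∈ W ∩ (S : Set V), p z - p a ∈ K := by
    rcases Set.eq_empty_or_nonempty (W ∩ (S : Set V)) with hWe | ⟨z₀, hz₀⟩
    · exact ⟨⊥, bot_le, by simp, by rw [hWe]; simp⟩
    · refine ⟨vectorSpan ℝ (p '' (W ∩ (S : Set V))) ⊔ Submodule.span ℝ {p z₀ - p a},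
        ?_, ?_, ?_⟩
      · apply sup_le
        · exact vectorSpan_mono ℝ (Set.image_mono Set.inter_subset_right)
        · rw [Submodule.span_le, Set.singleton_subset_iff]
          have hm1 : p z₀ ∈ p '' (S : Set V) := ⟨z₀, hz₀.2, rfl⟩
          have hm2 : p a ∈ p '' (S : Set V) := ⟨a, Finset.mem_coe.2 haS, rfl⟩
          have hv := vsub_mem_vectorSpan ℝ hm1 hm2
          simpa [vsub_eq_sub] using hv
      · have hsup := Submodule.finrank_add_le_finrank_add_finrank
          (vectorSpan ℝ (p '' (W ∩ (S : Set V)))) (Submodule.span ℝ {p z₀ - p a})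
        have hsing : Module.finrank ℝ
            (Submodule.span ℝ ({p z₀ - p a} : Set (EuclideanSpace ℝ (Fin d)))) ≤ 1 := by
          by_cases h0 : p z₀ - p a = 0
          · rw [h0, Submodule.span_zero_singleton]
            simp
          · rw [finrank_span_singleton h0]
        omega
      · intro z hz
        have hzz : p z - p z₀ ∈ vectorSpan ℝ (p '' (W ∩ (S : Set V))) := by
          have hm1 : p z ∈ p '' (W ∩ (S : Set V)) := ⟨z, hz, rfl⟩
          have hm2 : p z₀ ∈ p '' (W ∩ (S : Set V)) := ⟨z₀, hz₀, rfl⟩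
          have hv := vsub_mem_vectorSpan ℝ hm1 hm2
          simpa [vsub_eq_sub] using hv
        have hz₀a : p z₀ - p a ∈
            Submodule.span ℝ ({p z₀ - p a} : Set (EuclideanSpace ℝ (Fin d))) :=
          Submodule.mem_span_singleton_self _
        have hadd := add_mem (Submodule.mem_sup_left hzz) (Submodule.mem_sup_right hz₀a)
        simpa using hadd
  have hKlt : Module.finrank ℝ K < Module.finrank ℝ U := by
    rw [hdim]
    omega
  obtain ⟨c₀, hc₀U, hc₀0, hc₀K⟩ := exists_perp hKU hKlt
  set ℓ : EuclideanSpace ℝ (Fin d) →L[ℝ] ℝ := innerSL ℝ c₀ with hℓ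
  set c : ℝ := ℓ (p a) with hc
  have hWc : ∀ z ∈ S, z ∈ W → ℓ (p z) = c := by
    intro z hzS hzW
    have h0 := hc₀K _ (hKW z ⟨hzW, Finset.mem_coe.2 hzS⟩)
    have h1 : ℓ (p z) - ℓ (p a) = 0 := by
      rw [← map_sub]
      simpa [hℓ, innerSL_apply_apply] using h0
    rw [hc]
    linarith
  have hnc : ∃ z₁ ∈ S, ∃ z₂ ∈ S, ℓ (p z₂) < ℓ (p z₁) := by
    by_contra hcon
    push_neg at hcon
    have hconst : ∀ z₁ ∈ S, ∀ z₂ ∈ S, ℓ (p z₁) = ℓ (p z₂) := fun z₁ h₁ z₂ h₂ =>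
      le_antisymm (hcon z₁ h₁ z₂ h₂) (hcon z₂ h₂ z₁ h₁)
    have hUker : U ≤ LinearMap.ker (ℓ : EuclideanSpace ℝ (Fin d) →ₗ[ℝ] ℝ) := by
      rw [hU, vectorSpan_def, Submodule.span_le]
      rintro v hv
      rw [Set.mem_vsub] at hv
      obtain ⟨r, hr, q, hq, rfl⟩ := hv
      obtain ⟨r', hr', rfl⟩ := hr
      obtain ⟨q', hq', rfl⟩ := hq
      simp only [SetLike.mem_coe, LinearMap.mem_ker, vsub_eq_sub]
      rw [ContinuousLinearMap.coe_coe, map_sub, sub_eq_zero]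
      exact hconst r' (by exact_mod_cast hr') q' (by exact_mod_cast hq')
    have h0 : ℓ c₀ = 0 := hUker hc₀U
    rw [hℓ, innerSL_apply_apply] at h0
    exact hc₀0 (inner_self_eq_zero.1 h0)
  rw [SimpleGraph.connected_iff]
  refine ⟨?_, ⟨⟨a, ⟨Finset.mem_coe.2 haS, haW⟩⟩⟩⟩
  have hnc' : ∃ z₁ ∈ S, ∃ z₂ ∈ S, (-ℓ) (p z₂) < (-ℓ) (p z₁) := by
    obtain ⟨z₁, h₁, z₂, h₂, h12⟩ := hnc
    exact ⟨z₂, h₂, z₁, h₁, by simp only [ContinuousLinearMap.neg_apply]; linarith⟩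
  have hWc' : ∀ z ∈ S, z ∈ W → (-ℓ) (p z) = -c := by
    intro z hz1 hz2
    simp only [ContinuousLinearMap.neg_apply]
    rw [hWc z hz1 hz2]
  by_cases hbelow : ∃ z ∈ S, ℓ (p z) < c
  · by_cases habove : ∃ z ∈ S, c < ℓ (p z)
    · have hxa : ∀ q : ↥((S : Set V) \ W),
          ((polyGraph p).induce ((S : Set V) \ W)).Reachable q
            ⟨a, ⟨Finset.mem_coe.2 haS, haW⟩⟩ := by
        intro q
        obtain ⟨hqS, hqW⟩ := q.2
        rcases le_total (ℓ (p (q : V))) c with hle | hge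
        · obtain ⟨hh1, hh2, hrr⟩ := connect_low hP hFS hdim hn2 ℓ c W connFaces hWc hnc
            hbelow (Finset.mem_coe.1 hqS) hqW hle haS haW le_rfl
          exact hrr
        · have hbelow' : ∃ z ∈ S, (-ℓ) (p z) < -c := by
            obtain ⟨z, hzS, hzc⟩ := habove
            exact ⟨z, hzS, by simp only [ContinuousLinearMap.neg_apply]; linarith⟩
          obtain ⟨hh1, hh2, hrr⟩ := connect_low hP hFS hdim hn2 (-ℓ) (-c) W connFaces hWc'
            hnc' hbelow' (Finset.mem_coe.1 hqS) hqW
            (by simp only [ContinuousLinearMap.neg_apply]; linarith) haS haW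
            (by simp only [ContinuousLinearMap.neg_apply, hc]; exact le_rfl)
          exact hrr
      intro q q'
      exact (hxa q).trans (hxa q').symm
    · push_neg at habove
      intro q q'
      obtain ⟨hqS, hqW⟩ := q.2
      obtain ⟨hq'S, hq'W⟩ := q'.2
      obtain ⟨hh1, hh2, hrr⟩ := connect_low hP hFS hdim hn2 ℓ c W connFaces hWc hnc
        hbelow (Finset.mem_coe.1 hqS) hqW (habove _ (Finset.mem_coe.1 hqS))
        (Finset.mem_coe.1 hq'S) hq'W (habove _ (Finset.mem_coe.1 hq'S))
      exact hrr
  · push_neg at hbelow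
    by_cases habove : ∃ z ∈ S, c < ℓ (p z)
    · have hbelow' : ∃ z ∈ S, (-ℓ) (p z) < -c := by
        obtain ⟨z, hzS, hzc⟩ := habove
        exact ⟨z, hzS, by simp only [ContinuousLinearMap.neg_apply]; linarith⟩
      intro q q'
      obtain ⟨hqS, hqW⟩ := q.2
      obtain ⟨hq'S, hq'W⟩ := q'.2
      obtain ⟨hh1, hh2, hrr⟩ := connect_low hP hFS hdim hn2 (-ℓ) (-c) W connFaces hWc'
        hnc' hbelow' (Finset.mem_coe.1 hqS) hqW
        (by simp only [ContinuousLinearMap.neg_apply]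
            have := hbelow _ (Finset.mem_coe.1 hqS); linarith)
        (Finset.mem_coe.1 hq'S) hq'W
        (by simp only [ContinuousLinearMap.neg_apply]
            have := hbelow _ (Finset.mem_coe.1 hq'S); linarith)
      exact hrr
    · exfalso
      push_neg at habove
      obtain ⟨z₁, h₁, z₂, h₂, h12⟩ := hnc
      have e₁ : ℓ (p z₁) = c := le_antisymm (habove _ h₁) (hbelow _ h₁)
      have e₂ : ℓ (p z₂) = c := le_antisymm (habove _ h₂) (hbelow _ h₂)
      rw [e₁, e₂] at h12
      exact lt_irrefl _ h12

end Balinski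

/-- strengthened Balinski: if removing a set `W` of vertices of a
`d`-polytope disconnects its graph, then the affine span of the points of `W` has
dimension at least `d − 1`. -/
theorem stmt4 {V : Type} [Fintype V] {d : ℕ} (p : V → EuclideanSpace ℝ (Fin d))
    (hP : IsPolytope p) (W : Set V)
    (hdis : ¬ ((polyGraph p).induce Wᶜ).Connected) :
    d - 1 ≤ Module.finrank ℝ (vectorSpan ℝ (p '' W)) := by
  classical
  by_contra hlt
  push_neg at hlt
  have hWd : Module.finrank ℝ
      (vectorSpan ℝ (p '' (W ∩ ((Finset.univ : Finset V) : Set V)))) + 2 ≤ d := by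
    have hWu : W ∩ ((Finset.univ : Finset V) : Set V) = W := by simp
    rw [hWu]
    omega
  have hdim : Module.finrank ℝ
      (vectorSpan ℝ (p '' ((Finset.univ : Finset V) : Set V))) = d := by
    have h1 : p '' ((Finset.univ : Finset V) : Set V) = Set.range p := by
      rw [Finset.coe_univ, Set.image_univ]
    rw [h1, ← direction_affineSpan, hP.spans, AffineSubspace.direction_top, finrank_top]
    exact finrank_euclideanSpace_fin
  have hconn := Balinski.main hP d Finset.univ (Or.inl rfl) hdim W hWd
  apply hdis
  have hset : ((Finset.univ : Finset V) : Set V) \ W = Wᶜ := by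
    rw [Finset.coe_univ]
    exact (Set.compl_eq_univ_diff W).symm
  rwa [hset] at hconn

end
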